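/- arXiv:1905.08666 — 6 statements merged into one kernel-verified Lean document; each statement's English description precedes it below -/
import Mathlib

section
/- Let k ∈ (0,1), λ ∈ (0,1], and z ∈ 𝔻. Then 1 + k·z² + (1 + k)·λ·z ≠ 0, and the value p := (1 − k·z² + (1 − k)·λ·z)/(1 + k·z² + (1 + k)·λ·z) satisfies |p − 1| < k·|p + 1|; in particular p ∈ U(k) and Re p > 0. (Equivalently, (p − 1)/(p + 1) = −k·z·(z + λ)/(1 + λ·z) and |z·(z + λ)/(1 + λ·z)| < 1 for z ∈ 𝔻.) -/
open Complex


private lemma repos_aux (p : ℂ) (k : ℝ) (hk1 : k < 1)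
    (h : ‖p - 1‖ < k * ‖p + 1‖) : 0 < p.re := by
  have hlt : ‖p - 1‖ < ‖p + 1‖ := by
    nlinarith [norm_nonneg (p + 1)]
  have hsq : ‖p - 1‖ ^ 2 < ‖p + 1‖ ^ 2 := by
    nlinarith [norm_nonneg (p - 1)]
  rw [Complex.sq_norm, Complex.sq_norm, Complex.normSq_apply, Complex.normSq_apply] at hsq
  simp only [Complex.sub_re, Complex.sub_im, Complex.add_re, Complex.add_im,
    Complex.one_re, Complex.one_im] at hsq
  nlinarith

/-- For `k ∈ (0,1)`, `λ ∈ (0,1]` and `z` in the unit disk, the value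
`p = (1 - k z² + (1-k) λ z)/(1 + k z² + (1+k) λ z)` is well defined and satisfies
`|p - 1| < k |p + 1|`; in particular `p ∈ U(k)` and `Re p > 0`. Moreover
`(p-1)/(p+1) = -k z (z+λ)/(1+λz)` and `|z (z+λ)/(1+λz)| < 1`. -/
theorem stmt_2 (k l : ℝ) (hk0 : 0 < k) (hk1 : k < 1) (hl0 : 0 < l) (hl1 : l ≤ 1)
    (z : ℂ) (hz : ‖z‖ < 1) :
    1 + (k : ℂ) * z ^ 2 + (1 + (k : ℂ)) * (l : ℂ) * z ≠ 0 ∧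
    ‖(1 - (k : ℂ) * z ^ 2 + (1 - (k : ℂ)) * (l : ℂ) * z) /
          (1 + (k : ℂ) * z ^ 2 + (1 + (k : ℂ)) * (l : ℂ) * z) - 1‖
      < k * ‖(1 - (k : ℂ) * z ^ 2 + (1 - (k : ℂ)) * (l : ℂ) * z) /
          (1 + (k : ℂ) * z ^ 2 + (1 + (k : ℂ)) * (l : ℂ) * z) + 1‖ ∧
    0 < (((1 - (k : ℂ) * z ^ 2 + (1 - (k : ℂ)) * (l : ℂ) * z) /
          (1 + (k : ℂ) * z ^ 2 + (1 + (k : ℂ)) * (l : ℂ) * z))).re ∧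
    ((1 - (k : ℂ) * z ^ 2 + (1 - (k : ℂ)) * (l : ℂ) * z) /
          (1 + (k : ℂ) * z ^ 2 + (1 + (k : ℂ)) * (l : ℂ) * z) - 1) /
      ((1 - (k : ℂ) * z ^ 2 + (1 - (k : ℂ)) * (l : ℂ) * z) /
          (1 + (k : ℂ) * z ^ 2 + (1 + (k : ℂ)) * (l : ℂ) * z) + 1)
      = -(k : ℂ) * z * (z + (l : ℂ)) / (1 + (l : ℂ) * z) ∧
    ‖z * (z + (l : ℂ)) / (1 + (l : ℂ) * z)‖ < 1 := by
  set A : ℂ := 1 - (k : ℂ) * z ^ 2 + (1 - (k : ℂ)) * (l : ℂ) * z with hAdef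
  set B : ℂ := 1 + (k : ℂ) * z ^ 2 + (1 + (k : ℂ)) * (l : ℂ) * z with hBdef
  have hz2 : z.re ^ 2 + z.im ^ 2 < 1 := by
    have := Complex.sq_norm z
    rw [Complex.normSq_apply] at this
    nlinarith [norm_nonneg z]
  have hlz : (1 : ℂ) + (l : ℂ) * z ≠ 0 := by
    intro h
    have h1 : (l : ℂ) * z = -1 := by linear_combination h
    have h2 : ‖(l : ℂ) * z‖ = 1 := by rw [h1]; simp
    rw [norm_mul, Complex.norm_real, Real.norm_eq_abs, abs_of_pos hl0] at h2
    nlinarith [norm_nonneg z]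
  have habslz : 0 < ‖1 + (l : ℂ) * z‖ := by
    simpa [norm_pos_iff] using hlz
  have hR : 0 < (1 + l * z.re) ^ 2 + (l * z.im) ^ 2 := by
    have := Complex.normSq_pos.2 hlz
    rw [Complex.normSq_apply] at this
    simp only [Complex.add_re, Complex.add_im, Complex.mul_re, Complex.mul_im,
      Complex.one_re, Complex.one_im, Complex.ofReal_re, Complex.ofReal_im] at this
    nlinarith [this]
  have hRt : (z.re + l) ^ 2 + z.im ^ 2 ≤ (1 + l * z.re) ^ 2 + (l * z.im) ^ 2 := by
    nlinarith [mul_nonneg (by nlinarith : (0:ℝ) ≤ 1 - l ^ 2)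
      (by linarith : (0:ℝ) ≤ 1 - (z.re ^ 2 + z.im ^ 2))]
  -- key inequality
  have key : ‖z * (z + (l : ℂ))‖ < ‖1 + (l : ℂ) * z‖ := by
    have h2 : ‖z * (z + (l : ℂ))‖ ^ 2 < ‖1 + (l : ℂ) * z‖ ^ 2 := by
      rw [norm_mul, mul_pow, Complex.sq_norm, Complex.sq_norm, Complex.sq_norm,
        Complex.normSq_apply, Complex.normSq_apply, Complex.normSq_apply]
      simp only [Complex.add_re, Complex.add_im, Complex.mul_re, Complex.mul_im,
        Complex.one_re, Complex.one_im, Complex.ofReal_re, Complex.ofReal_im]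
      have hs : (0:ℝ) ≤ z.re ^ 2 + z.im ^ 2 := by positivity
      nlinarith [mul_nonneg (sub_nonneg.2 hRt) hs,
        mul_pos hR (by linarith : (0:ℝ) < 1 - (z.re ^ 2 + z.im ^ 2))]
    nlinarith [norm_nonneg (z * (z + (l : ℂ))), norm_nonneg (1 + (l : ℂ) * z)]
  have hB : B ≠ 0 := by
    intro h
    have hsplit : (1 : ℂ) + (l : ℂ) * z = -((k : ℂ) * (z * (z + (l : ℂ)))) := by
      have hBeq : B = (1 + (l : ℂ) * z) + (k : ℂ) * (z * (z + (l : ℂ))) := by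
        rw [hBdef]; push_cast; ring
      rw [hBeq] at h
      linear_combination h
    have h1 : ‖1 + (l : ℂ) * z‖ = k * ‖z * (z + (l : ℂ))‖ := by
      rw [hsplit]
      simp [map_mul, Complex.norm_real, abs_of_pos hk0]
    nlinarith [norm_nonneg (z * (z + (l : ℂ)))]
  have habsB : 0 < ‖B‖ := by simpa [norm_pos_iff] using hB
  have hsub : A / B - 1 = (-2 * (k : ℂ) * (z * (z + (l : ℂ)))) / B := by
    rw [div_sub_one hB]; congr 1; rw [hAdef, hBdef]; ring
  have hadd : A / B + 1 = (2 * (1 + (l : ℂ) * z)) / B := by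
    rw [div_add_one hB]; congr 1; rw [hAdef, hBdef]; ring
  have habssub : ‖A / B - 1‖ = 2 * k * ‖z * (z + (l : ℂ))‖ / ‖B‖ := by
    rw [hsub, norm_div]
    congr 1
    rw [show (-2 * (k : ℂ) * (z * (z + (l : ℂ)))) = ((-2 * k : ℝ) : ℂ) * (z * (z + (l : ℂ))) by push_cast; ring]
    rw [norm_mul, Complex.norm_real, Real.norm_eq_abs]
    rw [abs_of_nonpos (by nlinarith : (-2 : ℝ) * k ≤ 0)]
    ring
  have habsadd : ‖A / B + 1‖ = 2 * ‖1 + (l : ℂ) * z‖ / ‖B‖ := by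
    rw [hadd, norm_div, norm_mul]
    norm_num
  have hineq : ‖A / B - 1‖ < k * ‖A / B + 1‖ := by
    rw [habssub, habsadd, show k * (2 * ‖1 + (l : ℂ) * z‖ / ‖B‖)
      = 2 * k * ‖1 + (l : ℂ) * z‖ / ‖B‖ by ring,
      div_lt_div_iff₀ habsB habsB]
    nlinarith [mul_pos hk0 habsB]
  refine ⟨hB, hineq, repos_aux _ k hk1 hineq, ?_, ?_⟩
  · rw [hsub, hadd]
    field_simp
  · rw [norm_div, div_lt_one habslz]
    exact key
end

section
/- Let k ∈ (0,1), z ∈ 𝔻, and let w : [0,∞) → 𝔻 be differentiable with w(0) = z and w'(t) = −w(t)·(1 − k·w(t)²)/(1 + k·w(t)²) for all t ≥ 0 (the denominator being nonzero since |w(t)| < 1). Then w(t)/(1 − k·w(t)²) = e^{−t}·z/(1 − k·z²) for all t ≥ 0, and consequently e^t·w(t) → z/(1 − k·z²) as t → ∞. Hence the function f₁(z) = z/(1 − k·z²), whose third Taylor coefficient equals k, is represented by the Loewner–Kufarev equation with the Herglotz function p(z) = (1 − k·z²)/(1 + k·z²), whose values lie in U(k). -/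
open Filter

lemma nz (k : ℝ) (hk0 : 0 < k) (hk1 : k < 1) (u : ℂ) (hu : ‖u‖ < 1) :
    (1 : ℂ) - (k:ℂ) * u ^ 2 ≠ 0 ∧ (1 : ℂ) + (k:ℂ) * u ^ 2 ≠ 0 := by
  have h : ‖(k:ℂ) * u ^ 2‖ < 1 := by
    rw [norm_mul, norm_pow, Complex.norm_real, Real.norm_eq_abs, abs_of_pos hk0]
    nlinarith [norm_nonneg u]
  constructor
  · intro h0
    have : (k:ℂ) * u ^ 2 = 1 := by linear_combination -h0
    rw [this] at h; simp at h
  · intro h0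
    have : (k:ℂ) * u ^ 2 = -1 := by linear_combination h0
    rw [this] at h; simp at h

lemma dG (k : ℝ) (u : ℂ) (h1 : (1:ℂ) - k * u ^ 2 ≠ 0) :
    HasDerivAt (fun ζ : ℂ => ζ / (1 - (k:ℂ) * ζ ^ 2))
      ((1 + (k:ℂ) * u ^ 2) / (1 - (k:ℂ) * u ^ 2) ^ 2) u := by
  have h := (hasDerivAt_id u).div
    (((hasDerivAt_pow 2 u).const_mul (k:ℂ)).const_sub 1) h1
  refine h.congr_deriv ?_
  simp only [id, Pi.pow_apply]
  field_simp
  ring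

lemma dG1 (k : ℝ) (u : ℂ) (h1 : (1:ℂ) - k * u ^ 2 ≠ 0) :
    HasDerivAt (fun ζ : ℂ => (1 + (k:ℂ) * ζ ^ 2) / (1 - (k:ℂ) * ζ ^ 2) ^ 2)
      (2 * (k:ℂ) * u * (3 + (k:ℂ) * u ^ 2) / (1 - (k:ℂ) * u ^ 2) ^ 3) u := by
  have h := (((hasDerivAt_pow 2 u).const_mul (k:ℂ)).const_add 1).div
    ((((hasDerivAt_pow 2 u).const_mul (k:ℂ)).const_sub 1).pow 2) (pow_ne_zero 2 h1)
  refine h.congr_deriv ?_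
  simp only [id, Pi.pow_apply]
  field_simp
  ring

lemma dG2 (k : ℝ) :
    HasDerivAt (fun ζ : ℂ => 2 * (k:ℂ) * ζ * (3 + (k:ℂ) * ζ ^ 2) / (1 - (k:ℂ) * ζ ^ 2) ^ 3)
      (6 * (k:ℂ)) 0 := by
  have h1 : (1:ℂ) - (k:ℂ) * (0:ℂ) ^ 2 ≠ 0 := by norm_num
  have h := ((((hasDerivAt_id (0:ℂ)).const_mul (2 * (k:ℂ))).mul
      (((hasDerivAt_pow 2 (0:ℂ)).const_mul (k:ℂ)).const_add 3)).div
    ((((hasDerivAt_pow 2 (0:ℂ)).const_mul (k:ℂ)).const_sub 1).pow 3) (pow_ne_zero 3 h1))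
  refine h.congr_deriv ?_
  norm_num; ring

lemma part3 (k : ℝ) (hk0 : 0 < k) (hk1 : k < 1) :
    iteratedDeriv 3 (fun ζ : ℂ => ζ / (1 - (k : ℂ) * ζ ^ 2)) 0 / 6 = (k : ℂ) := by
  set S : Set ℂ := {u | (1:ℂ) - k * u ^ 2 ≠ 0} with hS
  have hSo : IsOpen S := by
    have : Continuous fun u : ℂ => (1:ℂ) - k * u ^ 2 := by continuity
    exact isOpen_compl_singleton.preimage this
  have h0S : (0:ℂ) ∈ S := by simp [hS]
  have e1 : Set.EqOn (deriv (fun ζ : ℂ => ζ / (1 - (k : ℂ) * ζ ^ 2)))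
      (fun u => (1 + (k:ℂ) * u ^ 2) / (1 - (k:ℂ) * u ^ 2) ^ 2) S :=
    fun u hu => (dG k u hu).deriv
  have e2 : Set.EqOn (deriv (deriv (fun ζ : ℂ => ζ / (1 - (k : ℂ) * ζ ^ 2))))
      (fun u => 2 * (k:ℂ) * u * (3 + (k:ℂ) * u ^ 2) / (1 - (k:ℂ) * u ^ 2) ^ 3) S := by
    intro u hu
    have : deriv (fun ζ : ℂ => ζ / (1 - (k : ℂ) * ζ ^ 2)) =ᶠ[nhds u]
        (fun u => (1 + (k:ℂ) * u ^ 2) / (1 - (k:ℂ) * u ^ 2) ^ 2) :=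
      Filter.eventuallyEq_of_mem (hSo.mem_nhds hu) e1
    rw [this.deriv_eq, (dG1 k u hu).deriv]
  have e3 : deriv (deriv (deriv (fun ζ : ℂ => ζ / (1 - (k : ℂ) * ζ ^ 2)))) 0 = (6 : ℂ) * (k : ℂ) := by
    have : deriv (deriv (fun ζ : ℂ => ζ / (1 - (k : ℂ) * ζ ^ 2))) =ᶠ[nhds 0]
        (fun u => 2 * (k:ℂ) * u * (3 + (k:ℂ) * u ^ 2) / (1 - (k:ℂ) * u ^ 2) ^ 3) :=
      Filter.eventuallyEq_of_mem (hSo.mem_nhds h0S) e2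
    rw [this.deriv_eq, (dG2 k).deriv]
  rw [show (3:ℕ) = 2 + 1 from rfl, iteratedDeriv_succ, iteratedDeriv_succ, iteratedDeriv_succ,
    iteratedDeriv_zero, e3]
  field_simp

lemma part4 (k : ℝ) (hk0 : 0 < k) (hk1 : k < 1) :
    ∀ ζ ∈ Metric.ball (0 : ℂ) 1,
        ‖(1 - (k : ℂ) * ζ ^ 2) / (1 + (k : ℂ) * ζ ^ 2) - 1‖
          ≤ k * ‖(1 - (k : ℂ) * ζ ^ 2) / (1 + (k : ℂ) * ζ ^ 2) + 1‖ := by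
  intro ζ hζ
  rw [Metric.mem_ball, dist_zero_right] at hζ
  have hne := (nz k hk0 hk1 ζ hζ).2
  have h1 : (1 - (k : ℂ) * ζ ^ 2) / (1 + (k : ℂ) * ζ ^ 2) - 1
      = (-2 * (k:ℂ) * ζ ^ 2) / (1 + (k : ℂ) * ζ ^ 2) := by field_simp; ring
  have h2 : (1 - (k : ℂ) * ζ ^ 2) / (1 + (k : ℂ) * ζ ^ 2) + 1
      = 2 / (1 + (k : ℂ) * ζ ^ 2) := by field_simp; ring
  rw [h1, h2, norm_div, norm_div, ← mul_div_assoc,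
    div_le_div_iff_of_pos_right (norm_pos_iff.mpr hne)]
  have : ‖(-2 * (k:ℂ) * ζ ^ 2)‖ = 2 * k * ‖ζ‖ ^ 2 := by
    rw [norm_mul, norm_mul, norm_pow]
    simp [abs_of_pos hk0]
  rw [this]
  have : ‖(2:ℂ)‖ = 2 := by simp
  rw [this]
  have h3 : ‖ζ‖ ^ 2 < 1 := by nlinarith [norm_nonneg ζ]
  nlinarith

lemma part1 (k : ℝ) (hk0 : 0 < k) (hk1 : k < 1) (z : ℂ)
    (w : ℝ → ℂ) (hw_mem : ∀ t : ℝ, 0 ≤ t → ‖w t‖ < 1)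
    (hw0 : w 0 = z)
    (hode : ∀ t : ℝ, 0 ≤ t →
        HasDerivWithinAt w
          (-(w t * (1 - (k : ℂ) * w t ^ 2) / (1 + (k : ℂ) * w t ^ 2)))
          (Set.Ici 0) t) :
    ∀ t : ℝ, 0 ≤ t →
        w t / (1 - (k : ℂ) * w t ^ 2) = (Real.exp (-t) : ℂ) * z / (1 - (k : ℂ) * z ^ 2) := by
  set F : ℝ → ℂ := fun s => Complex.exp s * (w s / (1 - (k:ℂ) * w s ^ 2)) with hF
  have hFd : ∀ t ∈ Set.Ici (0:ℝ), HasDerivWithinAt F 0 (Set.Ici 0) t := by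
    intro t ht
    have ht' : (0:ℝ) ≤ t := ht
    have hw := hw_mem t ht'
    obtain ⟨h1, h2⟩ := nz k hk0 hk1 (w t) hw
    have hd1 : HasDerivWithinAt (fun s => w s / (1 - (k:ℂ) * w s ^ 2))
        (-(w t / (1 - (k:ℂ) * w t ^ 2))) (Set.Ici 0) t := by
      have := (dG k (w t) h1).comp_hasDerivWithinAt t (hode t ht')
      refine this.congr_deriv ?_
      field_simp
    have hexp : HasDerivWithinAt (fun s : ℝ => Complex.exp s) (Complex.exp t)
        (Set.Ici 0) t := (Complex.hasDerivAt_exp (t:ℂ)).comp_ofReal.hasDerivWithinAt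
    have := hexp.mul hd1
    refine this.congr_deriv ?_
    ring
  have hconst : ∀ t ∈ Set.Ici (0:ℝ), F t = F 0 := by
    intro t ht
    have := (convex_Ici (0:ℝ)).norm_image_sub_le_of_norm_hasDerivWithin_le hFd
      (fun x _ => norm_zero.le) Set.self_mem_Ici ht
    have h0 : F t - F 0 = 0 := by
      have hn := norm_nonneg (F t - F 0)
      have : ‖F t - F 0‖ = 0 := le_antisymm (by simpa using this) hn
      rwa [norm_eq_zero] at this
    linear_combination h0
  intro t ht
  have key : Complex.exp t * (w t / (1 - (k:ℂ) * w t ^ 2)) = z / (1 - (k:ℂ) * z ^ 2) := by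
    have := hconst t ht
    simpa [hF, hw0] using this
  have hcast : ((Real.exp (-t) : ℝ) : ℂ) = Complex.exp (-(t:ℂ)) := by
    rw [Complex.ofReal_exp, Complex.ofReal_neg]
  rw [hcast, Complex.exp_neg, mul_comm, mul_div_assoc, ← key]
  field_simp [Complex.exp_ne_zero]

lemma part2 (k : ℝ) (hk0 : 0 < k) (hk1 : k < 1) (z : ℂ)
    (w : ℝ → ℂ) (hw_mem : ∀ t : ℝ, 0 ≤ t → ‖w t‖ < 1)
    (h1 : ∀ t : ℝ, 0 ≤ t →
        w t / (1 - (k : ℂ) * w t ^ 2) = (Real.exp (-t) : ℂ) * z / (1 - (k : ℂ) * z ^ 2)) :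
    Tendsto (fun t : ℝ => (Real.exp t : ℂ) * w t) atTop
      (nhds (z / (1 - (k : ℂ) * z ^ 2))) := by
  set C : ℝ := ‖z / (1 - (k:ℂ) * z ^ 2)‖ with hC
  have heq : ∀ t : ℝ, 0 ≤ t →
      (Real.exp t : ℂ) * w t = (z / (1 - (k:ℂ) * z ^ 2)) * (1 - (k:ℂ) * w t ^ 2) := by
    intro t ht
    have hD := (nz k hk0 hk1 (w t) (hw_mem t ht)).1
    have h := h1 t ht
    have hwt : w t = ((Real.exp (-t) : ℂ) * z / (1 - (k:ℂ) * z ^ 2)) *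
        (1 - (k:ℂ) * w t ^ 2) := by
      rw [← h, div_mul_cancel₀ _ hD]
    have hee : ((Real.exp t : ℝ):ℂ) * ((Real.exp (-t) : ℝ):ℂ) = 1 := by
      rw [← Complex.ofReal_mul, ← Real.exp_add]
      norm_num
    calc ((Real.exp t : ℝ):ℂ) * w t
        = ((Real.exp t : ℝ):ℂ) * ((w t / (1 - (k:ℂ) * w t ^ 2)) * (1 - (k:ℂ) * w t ^ 2)) := by
          rw [div_mul_cancel₀ _ hD]
      _ = (((Real.exp t : ℝ):ℂ) * ((Real.exp (-t) : ℝ):ℂ)) * (z / (1 - (k:ℂ) * z ^ 2))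
            * (1 - (k:ℂ) * w t ^ 2) := by rw [h]; ring
      _ = (z / (1 - (k:ℂ) * z ^ 2)) * (1 - (k:ℂ) * w t ^ 2) := by rw [hee, one_mul]
  have habs : ∀ t : ℝ, 0 ≤ t → ‖w t‖ ≤ 2 * C * Real.exp (-t) := by
    intro t ht
    have hD := (nz k hk0 hk1 (w t) (hw_mem t ht)).1
    have h := h1 t ht
    have hwt : w t = ((Real.exp (-t) : ℂ) * z / (1 - (k:ℂ) * z ^ 2)) *
        (1 - (k:ℂ) * w t ^ 2) := by
      rw [← h, div_mul_cancel₀ _ hD]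
    have hDb : ‖1 - (k:ℂ) * w t ^ 2‖ ≤ 2 := by
      calc ‖1 - (k:ℂ) * w t ^ 2‖
          ≤ ‖(1:ℂ)‖ + ‖(k:ℂ) * w t ^ 2‖ := by
            exact (norm_sub_le _ _)
        _ ≤ 2 := by
            rw [norm_mul, norm_pow, Complex.norm_real, Real.norm_eq_abs, abs_of_pos hk0]
            simp only [norm_one]
            nlinarith [norm_nonneg (w t), hw_mem t ht]
    have habs1 : ‖w t‖
        = Real.exp (-t) * C * ‖1 - (k:ℂ) * w t ^ 2‖ := by
      conv_lhs => rw [hwt]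
      rw [mul_div_assoc, norm_mul, norm_mul, Complex.norm_real, Real.norm_eq_abs,
        abs_of_pos (Real.exp_pos _), hC]
    calc ‖w t‖
        = Real.exp (-t) * C * ‖1 - (k:ℂ) * w t ^ 2‖ := habs1
      _ ≤ 2 * C * Real.exp (-t) := by
          have : 0 ≤ Real.exp (-t) * C := mul_nonneg (Real.exp_pos _).le (norm_nonneg _)
          nlinarith
  have hw0 : Tendsto w atTop (nhds (0:ℂ)) := by
    rw [tendsto_zero_iff_norm_tendsto_zero]
    apply squeeze_zero' (Filter.Eventually.of_forall fun t => norm_nonneg _)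
    · filter_upwards [eventually_ge_atTop (0:ℝ)] with t ht
      exact habs t ht
    · have : Tendsto (fun t : ℝ => 2 * C * Real.exp (-t)) atTop (nhds (2 * C * 0)) :=
        (Real.tendsto_exp_neg_atTop_nhds_zero).const_mul _
      simpa using this
  have hrhs : Tendsto (fun t : ℝ => (z / (1 - (k:ℂ) * z ^ 2)) * (1 - (k:ℂ) * w t ^ 2))
      atTop (nhds (z / (1 - (k:ℂ) * z ^ 2))) := by
    have : Tendsto (fun t : ℝ => (1:ℂ) - (k:ℂ) * w t ^ 2) atTop (nhds 1) := by
      have := (tendsto_const_nhds (x := ((k:ℂ))) (f := atTop (α := ℝ))).mul (hw0.pow 2)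
      simpa using tendsto_const_nhds.sub this
    have h2 := tendsto_const_nhds (x := z / (1 - (k:ℂ) * z ^ 2)) (f := atTop (α := ℝ))
    simpa using h2.mul this
  exact hrhs.congr' (by filter_upwards [eventually_ge_atTop (0:ℝ)] with t ht using (heq t ht).symm)

/-- Explicit solution of the Loewner–Kufarev ODE with Herglotz function
`p(z) = (1 - k z²)/(1 + k z²)`: any solution `w` on `[0,∞)` with `w(0) = z` satisfies
`w(t)/(1 - k w(t)²) = e^{-t} z/(1 - k z²)`, hence `e^t w(t) → z/(1 - k z²)`.
The function `f₁(z) = z/(1 - k z²)` has third Taylor coefficient `k`, and the values of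
`p` on the disk lie in `U(k) = {w : |w - 1| ≤ k |w + 1|}`. -/
theorem stmt_3 (k : ℝ) (hk0 : 0 < k) (hk1 : k < 1) (z : ℂ) (hz : ‖z‖ < 1)
    (w : ℝ → ℂ) (hw_mem : ∀ t : ℝ, 0 ≤ t → ‖w t‖ < 1)
    (hw0 : w 0 = z)
    (hode : ∀ t : ℝ, 0 ≤ t →
        HasDerivWithinAt w
          (-(w t * (1 - (k : ℂ) * w t ^ 2) / (1 + (k : ℂ) * w t ^ 2)))
          (Set.Ici 0) t) :
    (∀ t : ℝ, 0 ≤ t →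
        w t / (1 - (k : ℂ) * w t ^ 2) = (Real.exp (-t) : ℂ) * z / (1 - (k : ℂ) * z ^ 2)) ∧
    Tendsto (fun t : ℝ => (Real.exp t : ℂ) * w t) atTop
      (nhds (z / (1 - (k : ℂ) * z ^ 2))) ∧
    iteratedDeriv 3 (fun ζ : ℂ => ζ / (1 - (k : ℂ) * ζ ^ 2)) 0 / 6 = (k : ℂ) ∧
    (∀ ζ ∈ Metric.ball (0 : ℂ) 1,
        ‖(1 - (k : ℂ) * ζ ^ 2) / (1 + (k : ℂ) * ζ ^ 2) - 1‖
          ≤ k * ‖(1 - (k : ℂ) * ζ ^ 2) / (1 + (k : ℂ) * ζ ^ 2) + 1‖) := by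
  exact ⟨part1 k hk0 hk1 z w hw_mem hw0 hode,
    part2 k hk0 hk1 z w hw_mem (part1 k hk0 hk1 z w hw_mem hw0 hode),
    part3 k hk0 hk1, part4 k hk0 hk1⟩
end

section
/- Let k ∈ (0,1) and let a, b ∈ ℂ with |a| ≤ k and |b| ≤ k. Then |a − b| ≤ (2k/(1 + k²))·|1 − conj(b)·a|. (In other words, the pseudo-hyperbolic diameter of the closed disk of radius k centered at 0 equals 2k/(1 + k²); equivalently, a Möbius automorphism of the unit disk sending a point of the closed disk {|z| ≤ k} to 0 maps that disk into {|z| ≤ 2k/(1 + k²)}.) -/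
private lemma aux_sq (c x y t : ℝ) (hcc : c ^ 2 ≤ 1) (hxyt : 0 ≤ x * y + t)
    (hsq2 : (x + y) ^ 2 ≤ c ^ 2 * (1 + x * y) ^ 2) :
    x ^ 2 + y ^ 2 - 2 * t ≤ c ^ 2 * (1 - 2 * t + x ^ 2 * y ^ 2) := by
  nlinarith [mul_nonneg (sub_nonneg.mpr hcc) hxyt]


/-- The pseudo-hyperbolic diameter of the closed disk `{|z| ≤ k}` is
`2k/(1+k²)`: if `|a| ≤ k` and `|b| ≤ k` then `|a - b| ≤ (2k/(1+k²)) |1 - conj(b) a|`. -/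
theorem stmt_6 (k : ℝ) (hk0 : 0 < k) (hk1 : k < 1) (a b : ℂ)
    (ha : ‖a‖ ≤ k) (hb : ‖b‖ ≤ k) :
    ‖a - b‖ ≤ 2 * k / (1 + k ^ 2) * ‖1 - (starRingEnd ℂ) b * a‖ := by
  set c : ℝ := 2 * k / (1 + k ^ 2) with hc
  have hden : (0:ℝ) < 1 + k ^ 2 := by positivity
  have hc1 : c ≤ 1 := by
    rw [hc, div_le_one hden]; nlinarith
  have hc0 : 0 ≤ c := by positivity
  have hck : c * (1 + k ^ 2) = 2 * k := by
    rw [hc]; field_simp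
  have h1 : ‖a - b‖ ^ 2
      = ‖a‖ ^ 2 + ‖b‖ ^ 2 - 2 * ((starRingEnd ℂ) b * a).re := by
    rw [Complex.sq_norm, Complex.sq_norm, Complex.sq_norm]
    simp [Complex.normSq_apply, Complex.mul_re, Complex.sub_re, Complex.sub_im]
    ring
  have h2 : ‖1 - (starRingEnd ℂ) b * a‖ ^ 2
      = 1 - 2 * ((starRingEnd ℂ) b * a).re + ‖a‖ ^ 2 * ‖b‖ ^ 2 := by
    rw [Complex.sq_norm, Complex.sq_norm, Complex.sq_norm]
    simp [Complex.normSq_apply, Complex.mul_re, Complex.sub_re, Complex.sub_im,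
      Complex.one_re, Complex.one_im]
    ring
  have ht : -(‖a‖ * ‖b‖) ≤ ((starRingEnd ℂ) b * a).re := by
    have h := Complex.abs_re_le_norm ((starRingEnd ℂ) b * a)
    have habs : ‖(starRingEnd ℂ) b * a‖ = ‖b‖ * ‖a‖ := by
      rw [norm_mul, Complex.norm_conj]
    rw [habs] at h
    calc -(‖a‖ * ‖b‖) = -(‖b‖ * ‖a‖) := by ring
      _ ≤ -|((starRingEnd ℂ) b * a).re| := neg_le_neg h
      _ ≤ ((starRingEnd ℂ) b * a).re := neg_abs_le _
  -- key scalar inequality: c*(1+|a||b|) ≥ |a|+|b|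
  have ha0 := norm_nonneg a
  have hb0 := norm_nonneg b
  have hkb : k * ‖b‖ ≤ k * k := mul_le_mul_of_nonneg_left hb hk0.le
  have hka : k * ‖a‖ ≤ k * k := mul_le_mul_of_nonneg_left ha hk0.le
  have hkey : ‖a‖ + ‖b‖ ≤ c * (1 + ‖a‖ * ‖b‖) := by
    have hfa : 0 ≤ (k - ‖a‖) * (1 - k * ‖b‖) :=
      mul_nonneg (by linarith) (by nlinarith)
    have hfb : 0 ≤ (k - ‖b‖) * (1 - k * ‖a‖) :=
      mul_nonneg (by linarith) (by nlinarith)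
    rw [hc, le_div_iff₀ hden] at *
    nlinarith
  have hxyt : 0 ≤ ‖a‖ * ‖b‖ + ((starRingEnd ℂ) b * a).re := by linarith
  have hcc : c ^ 2 ≤ 1 := by nlinarith
  have hsq2 : (‖a‖ + ‖b‖) ^ 2
      ≤ c ^ 2 * (1 + ‖a‖ * ‖b‖) ^ 2 := by
    have h0 : 0 ≤ ‖a‖ + ‖b‖ := by linarith
    nlinarith [hkey, h0, mul_nonneg hc0 (by nlinarith : (0:ℝ) ≤ 1 + ‖a‖ * ‖b‖)]
  -- squared inequality
  have hsq : ‖a - b‖ ^ 2 ≤ (c * ‖1 - (starRingEnd ℂ) b * a‖) ^ 2 := by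
    rw [mul_pow, h1, h2]
    exact aux_sq c _ _ _ hcc hxyt hsq2
  have hR : 0 ≤ c * ‖1 - (starRingEnd ℂ) b * a‖ := by positivity
  exact le_of_pow_le_pow_left₀ (by norm_num) hR hsq
end

section
/- Let f be holomorphic on an open set U ⊆ ℂ, let a₂ ∈ ℂ, and for w ∈ U with f'(w) ≠ 0 set b(w) := a₂ − f''(w)/(2·f'(w)) and S_f(w) := f'''(w)/f'(w) − (3/2)·(f''(w)/f'(w))². Define Φ(z, w) := f(w) + f'(w)·(z − w)/(1 + b(w)·(z − w)) and φ(z, w) := 2·a₂·(z − w) + (z − w)²·(a₂² + S_f(w)/2). Then Φ(z, z) = f(z) for all z ∈ U with f'(z) ≠ 0, and at every point (z, w) with w ∈ U, f'(w) ≠ 0 and 1 + b(w)·(z − w) ≠ 0, the partial derivatives of Φ satisfy ∂Φ/∂w (z, w) = φ(z, w)·∂Φ/∂z (z, w). -/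
noncomputable section

/-- The Schwarzian derivative `S_f = f'''/f' - (3/2)(f''/f')²`. -/
def schwarzian (f : ℂ → ℂ) (w : ℂ) : ℂ :=
  deriv (deriv (deriv f)) w / deriv f w - (3 / 2) * (deriv (deriv f) w / deriv f w) ^ 2

/-- `b(w) = a₂ - f''(w)/(2 f'(w))`. -/
def beckerB (f : ℂ → ℂ) (a₂ : ℂ) (w : ℂ) : ℂ :=
  a₂ - deriv (deriv f) w / (2 * deriv f w)

/-- `Φ(z,w) = f(w) + f'(w)(z-w)/(1 + b(w)(z-w))`. -/
def beckerPhi (f : ℂ → ℂ) (a₂ : ℂ) (z w : ℂ) : ℂ :=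
  f w + deriv f w * (z - w) / (1 + beckerB f a₂ w * (z - w))

/-- `φ(z,w) = 2 a₂ (z-w) + (z-w)² (a₂² + S_f(w)/2)`. -/
def beckerphi (f : ℂ → ℂ) (a₂ : ℂ) (z w : ℂ) : ℂ :=
  2 * a₂ * (z - w) + (z - w) ^ 2 * (a₂ ^ 2 + schwarzian f w / 2)

/-- `Φ(z,z) = f(z)` on `U` where `f' ≠ 0`, and at every point `(z,w)`
with `w ∈ U`, `f'(w) ≠ 0`, `1 + b(w)(z-w) ≠ 0`, the partial derivatives of `Φ` exist and
satisfy `∂Φ/∂w (z,w) = φ(z,w) · ∂Φ/∂z (z,w)`. -/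
theorem stmt_11 (U : Set ℂ) (hU : IsOpen U) (f : ℂ → ℂ)
    (hf : DifferentiableOn ℂ f U) (a₂ : ℂ) :
    (∀ z ∈ U, deriv f z ≠ 0 → beckerPhi f a₂ z z = f z) ∧
    (∀ z w : ℂ, w ∈ U → deriv f w ≠ 0 → 1 + beckerB f a₂ w * (z - w) ≠ 0 →
      ∃ A : ℂ,
        HasDerivAt (fun z' : ℂ => beckerPhi f a₂ z' w) A z ∧
        HasDerivAt (fun w' : ℂ => beckerPhi f a₂ z w') (beckerphi f a₂ z w * A) w) := by
  have hA : AnalyticOnNhd ℂ f U := hf.analyticOnNhd hU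
  have hA1 : AnalyticOnNhd ℂ (deriv f) U := hA.deriv
  have hA2 : AnalyticOnNhd ℂ (deriv (deriv f)) U := hA1.deriv
  constructor
  · intro z _ _
    simp [beckerPhi]
  · intro z w hw hu hD
    set u := deriv f w with hu_def
    set v := deriv (deriv f) w with hv_def
    set t := deriv (deriv (deriv f)) w with ht_def
    set b := beckerB f a₂ w with hb_def
    set D : ℂ := 1 + b * (z - w) with hD_def
    -- z-partial derivative
    have hzl : HasDerivAt (fun z' : ℂ => u * (z' - w)) u z := by
      simpa using ((hasDerivAt_id z).sub_const w).const_mul u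
    have hzd : HasDerivAt (fun z' : ℂ => 1 + b * (z' - w)) b z := by
      simpa using (((hasDerivAt_id z).sub_const w).const_mul b).const_add 1
    have hz : HasDerivAt (fun z' : ℂ => beckerPhi f a₂ z' w)
        ((u * (1 + b * (z - w)) - u * (z - w) * b) / (1 + b * (z - w)) ^ 2) z := by
      simpa [beckerPhi] using ((hzl.div hzd hD).const_add (f w))
    refine ⟨(u * (1 + b * (z - w)) - u * (z - w) * b) / (1 + b * (z - w)) ^ 2, hz, ?_⟩
    -- derivatives of f, f', f'' at w
    have hfw : HasDerivAt f u w := ((hA w hw).differentiableAt).hasDerivAt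
    have hf1 : HasDerivAt (deriv f) v w := ((hA1 w hw).differentiableAt).hasDerivAt
    have hf2 : HasDerivAt (deriv (deriv f)) t w := ((hA2 w hw).differentiableAt).hasDerivAt
    have h2u : (2 : ℂ) * u ≠ 0 := by simpa using hu
    -- derivative of b
    have hbw : HasDerivAt (fun w' => beckerB f a₂ w')
        (0 - (t * (2 * u) - v * (2 * v)) / (2 * u) ^ 2) w := by
      have : HasDerivAt (fun w' => deriv (deriv f) w' / (2 * deriv f w'))
          ((t * (2 * u) - v * (2 * v)) / (2 * u) ^ 2) w :=
        hf2.div (hf1.const_mul 2) h2u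
      exact (hasDerivAt_const w a₂).sub this
    -- derivative of numerator and denominator in w
    have hnum : HasDerivAt (fun w' => deriv f w' * (z - w'))
        (v * (z - w) + u * (-1)) w := by
      have := hf1.mul (((hasDerivAt_id w).const_mul (1:ℂ)).const_sub z)
      exact hf1.mul ((hasDerivAt_id w).const_sub z)
    have hden : HasDerivAt (fun w' => 1 + beckerB f a₂ w' * (z - w'))
        ((0 - (t * (2 * u) - v * (2 * v)) / (2 * u) ^ 2) * (z - w) + b * (-1)) w := by
      exact (hbw.mul ((hasDerivAt_id w).const_sub z)).const_add 1
    have hww : HasDerivAt (fun w' : ℂ => beckerPhi f a₂ z w')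
        (u + ((v * (z - w) + u * (-1)) * (1 + b * (z - w)) -
          (u * (z - w)) * ((0 - (t * (2 * u) - v * (2 * v)) / (2 * u) ^ 2) * (z - w) + b * (-1)))
            / (1 + b * (z - w)) ^ 2) w := by
      exact hfw.add (hnum.div hden hD)
    convert hww using 1
    have hD2 : (1 + b * (z - w)) ^ 2 ≠ 0 := pow_ne_zero 2 hD
    have key : beckerphi f a₂ z w * u =
        u * (1 + b * (z - w)) ^ 2 +
          ((v * (z - w) + u * (-1)) * (1 + b * (z - w)) -
            u * (z - w) *
              ((0 - (t * (2 * u) - v * (2 * v)) / (2 * u) ^ 2) * (z - w) + b * (-1))) := by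
      simp only [beckerphi, schwarzian, hb_def, beckerB, ← hu_def, ← hv_def, ← ht_def]
      clear_value u v t
      field_simp [hu]
      ring
    have h1 : u * (1 + b * (z - w)) - u * (z - w) * b = u := by ring
    rw [h1, ← mul_div_assoc, key, add_div, mul_div_cancel_right₀ u hD2]
end
end

section
/- For z ∈ 𝔻, using principal branches (so that (1 − z²)^{1/2} has positive real part for z ∈ 𝔻), define f(z) := 2z·(i·z + (1 − z²)^{1/2})^{i} / (1 + (1 − z²)^{1/2}). Then 1 + (1 − z²)^{1/2} ≠ 0, f is holomorphic on 𝔻 with f(0) = 0 and f'(0) = 1, and for every z ∈ 𝔻 \ {0}, f(z)/(z·f'(z)) = ((1 + z)/(1 − z))^{1/2}. Moreover, Re((1 + z)/(1 − z)) > 0 for z ∈ 𝔻, so |arg(f(z)/(z·f'(z)))| < π/4. -/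
open Complex

noncomputable section

lemma re_cpow_half_pos {w : ℂ} (hw : w ∈ slitPlane) : 0 < (w ^ ((1:ℂ)/2)).re := by
  have hw0 : w ≠ 0 := slitPlane_ne_zero hw
  rw [Complex.cpow_def_of_ne_zero hw0, Complex.exp_re]
  apply mul_pos (Real.exp_pos _)
  apply Real.cos_pos_of_mem_Ioo
  have h1 : (Complex.log w * ((1:ℂ)/2)).im = w.arg / 2 := by
    simp [Complex.mul_im, Complex.log_im, Complex.log_re]
    ring
  rw [h1]
  have h2 := Complex.arg_le_pi w
  have h3 := Complex.neg_pi_lt_arg w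
  have h4 : w.arg ≠ Real.pi := (Complex.mem_slitPlane_iff_arg.mp hw).1
  constructor
  · nlinarith [Real.pi_pos]
  · nlinarith [Real.pi_pos, lt_of_le_of_ne h2 h4]

lemma sq_S {z : ℂ} : ((1 - z ^ 2) ^ ((1:ℂ)/2)) ^ 2 = 1 - z ^ 2 := by
  rw [show ((1:ℂ)/2) = ((2:ℕ):ℂ)⁻¹ by norm_num]
  exact Complex.cpow_nat_inv_pow _ two_ne_zero

lemma normSq_lt_one {z : ℂ} (hz : ‖z‖ < 1) : z.re ^ 2 + z.im ^ 2 < 1 := by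
  have h : ‖z‖ ^ 2 = Complex.normSq z := Complex.sq_norm z
  rw [Complex.normSq_apply] at h
  have h2 : ‖z‖ < 1 := hz
  nlinarith [norm_nonneg z]

lemma re_one_sub_sq_pos {z : ℂ} (hz : ‖z‖ < 1) : 0 < (1 - z ^ 2).re := by
  have := normSq_lt_one hz
  simp [Complex.sub_re, pow_two, Complex.mul_re]
  nlinarith

lemma spos {z : ℂ} (hz : ‖z‖ < 1) : 0 < ((1 - z ^ 2) ^ ((1:ℂ)/2)).re :=
  re_cpow_half_pos (Or.inl (re_one_sub_sq_pos hz))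

lemma w_mul {z : ℂ} :
    (Complex.I * z + (1 - z ^ 2) ^ ((1:ℂ)/2)) *
      ((1 - z ^ 2) ^ ((1:ℂ)/2) - Complex.I * z) = 1 := by
  have h := sq_S (z := z)
  have hI : (Complex.I : ℂ) ^ 2 = -1 := Complex.I_sq
  linear_combination h - (z^2) * hI

lemma w_ne_zero {z : ℂ} : Complex.I * z + (1 - z ^ 2) ^ ((1:ℂ)/2) ≠ 0 :=
  left_ne_zero_of_mul_eq_one w_mul

lemma w_slit {z : ℂ} (hz : ‖z‖ < 1) :
    Complex.I * z + (1 - z ^ 2) ^ ((1:ℂ)/2) ∈ slitPlane := by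
  set s := (1 - z ^ 2) ^ ((1:ℂ)/2) with hs
  set w := Complex.I * z + s with hwdef
  by_contra hcon
  rw [Complex.mem_slitPlane_iff] at hcon
  push_neg at hcon
  obtain ⟨h1, h2⟩ := hcon
  have hinv : w⁻¹ = s - Complex.I * z := (inv_eq_of_mul_eq_one_right w_mul).symm ▸ rfl
  have hsum : w + w⁻¹ = 2 * s := by rw [hinv]; ring
  have hre : w.re + (w⁻¹).re = 2 * s.re := by
    have := congrArg Complex.re hsum
    simpa [Complex.add_re, Complex.mul_re] using this
  have hinvre : (w⁻¹).re ≤ 0 := by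
    rw [Complex.inv_re]
    exact div_nonpos_of_nonpos_of_nonneg h1 (Complex.normSq_nonneg w)
  have := spos hz
  rw [← hs] at this
  linarith

lemma s_ne_zero {z : ℂ} (hz : ‖z‖ < 1) : (1 - z ^ 2) ^ ((1:ℂ)/2) ≠ 0 := by
  intro h
  have := spos hz
  rw [h] at this
  simp at this

lemma one_add_s_ne_zero {z : ℂ} (hz : ‖z‖ < 1) : 1 + (1 - z ^ 2) ^ ((1:ℂ)/2) ≠ 0 := by
  intro h
  have := spos hz
  have h2 := congrArg Complex.re h
  simp [Complex.add_re] at h2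
  linarith

lemma hasDerivAt_S {z : ℂ} (hz : ‖z‖ < 1) :
    HasDerivAt (fun x : ℂ => (1 - x ^ 2) ^ ((1:ℂ)/2))
      (-z / (1 - z ^ 2) ^ ((1:ℂ)/2)) z := by
  have hbase : HasDerivAt (fun x : ℂ => 1 - x ^ 2) (-(2 * z ^ 1)) z :=
    (hasDerivAt_pow 2 z).const_sub 1
  have h := hbase.cpow_const (c := (1:ℂ)/2) (Or.inl (re_one_sub_sq_pos hz))
  convert h using 1
  rw [show ((1:ℂ)/2 - 1) = -((1:ℂ)/2) by norm_num, Complex.cpow_neg]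
  have hs := s_ne_zero hz
  have hne : (1 - z ^ 2) ≠ 0 := by
    intro h0
    apply hs
    rw [h0, Complex.zero_cpow (by norm_num : ((1:ℂ)/2) ≠ 0)]
  field_simp

lemma hasDerivAt_wI {z : ℂ} (hz : ‖z‖ < 1) :
    HasDerivAt (fun x : ℂ => (Complex.I * x + (1 - x ^ 2) ^ ((1:ℂ)/2)) ^ Complex.I)
      (-((Complex.I * z + (1 - z ^ 2) ^ ((1:ℂ)/2)) ^ Complex.I)
        / (1 - z ^ 2) ^ ((1:ℂ)/2)) z := by
  have hdw : HasDerivAt (fun x : ℂ => Complex.I * x + (1 - x ^ 2) ^ ((1:ℂ)/2))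
      (Complex.I + -z / (1 - z ^ 2) ^ ((1:ℂ)/2)) z := by
    have := ((hasDerivAt_id z).const_mul Complex.I).add (hasDerivAt_S hz)
    simp only [mul_one] at this
    exact this
  set s := (1 - z ^ 2) ^ ((1:ℂ)/2) with hsdef
  have h := hdw.cpow_const (c := Complex.I) (w_slit hz)
  convert h using 1
  set w := Complex.I * z + s with hwdef
  have hwne : w ≠ 0 := w_ne_zero
  have hsne : s ≠ 0 := s_ne_zero hz
  rw [Complex.cpow_sub _ _ hwne, Complex.cpow_one]
  field_simp
  linear_combination (- w ^ Complex.I * s) * Complex.I_sq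

lemma hasDerivAt_F {z : ℂ} (hz : ‖z‖ < 1) :
    HasDerivAt (fun x : ℂ => 2 * x * (Complex.I * x + (1 - x ^ 2) ^ ((1 : ℂ) / 2)) ^ Complex.I
          / (1 + (1 - x ^ 2) ^ ((1 : ℂ) / 2)))
      (2 * (Complex.I * z + (1 - z ^ 2) ^ ((1:ℂ)/2)) ^ Complex.I * (1 - z)
        / ((1 - z ^ 2) ^ ((1:ℂ)/2) * (1 + (1 - z ^ 2) ^ ((1:ℂ)/2)))) z := by
  have hnum : HasDerivAt
      (fun x : ℂ => 2 * x * (Complex.I * x + (1 - x ^ 2) ^ ((1:ℂ)/2)) ^ Complex.I)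
      (2 * ((Complex.I * z + (1 - z ^ 2) ^ ((1:ℂ)/2)) ^ Complex.I)
        + 2 * z * (-((Complex.I * z + (1 - z ^ 2) ^ ((1:ℂ)/2)) ^ Complex.I)
            / (1 - z ^ 2) ^ ((1:ℂ)/2))) z := by
    have := (((hasDerivAt_id z).const_mul (2:ℂ)).mul (hasDerivAt_wI hz))
    exact this.congr_deriv (by simp only [id]; ring)
  have hden : HasDerivAt (fun x : ℂ => 1 + (1 - x ^ 2) ^ ((1:ℂ)/2))
      (-z / (1 - z ^ 2) ^ ((1:ℂ)/2)) z := (hasDerivAt_S hz).const_add 1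
  have h := hnum.div hden (one_add_s_ne_zero hz)
  refine (h.congr_deriv ?_)
  symm
  set s := (1 - z ^ 2) ^ ((1:ℂ)/2) with hsdef
  set A := (Complex.I * z + s) ^ Complex.I with hAdef
  have hsne : s ≠ 0 := s_ne_zero hz
  have h1s : (1:ℂ) + s ≠ 0 := one_add_s_ne_zero hz
  have hs2 : s ^ 2 = 1 - z ^ 2 := sq_S
  field_simp
  ring_nf
  linear_combination (-A) * hs2

lemma one_sub_ne {z : ℂ} (hz : ‖z‖ < 1) : (1:ℂ) - z ≠ 0 := by
  intro h
  have : (1:ℂ) = z := by linear_combination h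
  rw [← this] at hz
  simp at hz

lemma re_u_pos {z : ℂ} (hz : ‖z‖ < 1) :
    0 < ((1 - z ^ 2) ^ ((1:ℂ)/2) / (1 - z)).re := by
  set s := (1 - z ^ 2) ^ ((1:ℂ)/2) with hsdef
  have ha : 0 < s.re := spos hz
  have hs2 : s ^ 2 = 1 - z ^ 2 := sq_S
  have hre : s.re ^ 2 - s.im ^ 2 = 1 - (z.re ^ 2 - z.im ^ 2) := by
    have := congrArg Complex.re hs2
    simpa [pow_two, Complex.mul_re, Complex.sub_re, Complex.one_re, Complex.sub_im] using this
  have him : 2 * (s.re * s.im) = -(2 * (z.re * z.im)) := by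
    have := congrArg Complex.im hs2
    simp [pow_two, Complex.mul_im, Complex.sub_im, Complex.one_im] at this
    linarith
  have hz2 := normSq_lt_one hz
  rw [Complex.div_re]
  have hq : 0 < Complex.normSq (1 - z) := Complex.normSq_pos.mpr (one_sub_ne hz)
  rw [← add_div]
  apply div_pos _ hq
  have h1 : (1 - z).re = 1 - z.re := by simp
  have h2 : (1 - z).im = -z.im := by simp
  rw [h1, h2]
  nlinarith [sq_nonneg s.im, sq_nonneg z.im, mul_pos ha ha,
    mul_nonneg (sq_nonneg s.im) (show (0:ℝ) ≤ 1 - z.re by nlinarith),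
    mul_pos (show (0:ℝ) < 1 - z.re ^ 2 by nlinarith) (show (0:ℝ) < 1 - z.re by nlinarith)]

lemma re_v_pos {z : ℂ} (hz : ‖z‖ < 1) : 0 < ((1 + z) / (1 - z)).re := by
  rw [Complex.div_re]
  have hq : 0 < Complex.normSq (1 - z) := Complex.normSq_pos.mpr (one_sub_ne hz)
  rw [← add_div]
  apply div_pos _ hq
  have hz2 := normSq_lt_one hz
  simp only [Complex.add_re, Complex.add_im, Complex.sub_re, Complex.sub_im,
    Complex.one_re, Complex.one_im]
  nlinarith


lemma sq_S' {w : ℂ} : (w ^ ((1:ℂ)/2)) ^ 2 = w := by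
  rw [show ((1:ℂ)/2) = ((2:ℕ):ℂ)⁻¹ by norm_num]
  exact Complex.cpow_nat_inv_pow _ two_ne_zero

lemma sqrt_id {z : ℂ} (hz : ‖z‖ < 1) :
    (1 - z ^ 2) ^ ((1:ℂ)/2) / (1 - z) = ((1 + z) / (1 - z)) ^ ((1:ℂ)/2) := by
  set u := (1 - z ^ 2) ^ ((1:ℂ)/2) / (1 - z) with hu
  set c := ((1 + z) / (1 - z)) ^ ((1:ℂ)/2) with hc
  have hvslit : (1 + z) / (1 - z) ∈ slitPlane := Or.inl (re_v_pos hz)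
  have hcre : 0 < c.re := re_cpow_half_pos hvslit
  have hure : 0 < u.re := re_u_pos hz
  have hc2 : c ^ 2 = (1 + z) / (1 - z) := sq_S'
  have hu2 : u ^ 2 = (1 + z) / (1 - z) := by
    rw [hu, div_pow, sq_S]
    rw [div_eq_div_iff (pow_ne_zero 2 (one_sub_ne hz)) (one_sub_ne hz)]
    ring
  have hfact : (u - c) * (u + c) = 0 := by
    have : u ^ 2 = c ^ 2 := by rw [hu2, hc2]
    linear_combination this
  rcases mul_eq_zero.mp hfact with h | h
  · linear_combination h
  · exfalso
    have : u.re + c.re = 0 := by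
      have := congrArg Complex.re h
      simpa [Complex.add_re] using this
    linarith

lemma abs_arg_lt_pi_div_four {z : ℂ} (hz : ‖z‖ < 1) :
    |Complex.arg (((1 + z) / (1 - z)) ^ ((1:ℂ)/2))| < Real.pi / 4 := by
  set c := ((1 + z) / (1 - z)) ^ ((1:ℂ)/2) with hc
  have hcre : 0 < c.re := re_cpow_half_pos (Or.inl (re_v_pos hz))
  have h1 : |Complex.arg c| < Real.pi / 2 :=
    Complex.abs_arg_lt_pi_div_two_iff.mpr (Or.inl hcre)
  have hcne : c ≠ 0 := by
    intro h; rw [h] at hcre; simp at hcre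
  have hc2 : c * c = (1 + z) / (1 - z) := by
    have := sq_S' (w := (1 + z) / (1 - z))
    linear_combination this
  have hv : |Complex.arg (c * c)| < Real.pi / 2 := by
    rw [hc2]
    exact Complex.abs_arg_lt_pi_div_two_iff.mpr (Or.inl (re_v_pos hz))
  rw [abs_lt] at h1 hv ⊢
  have harg : Complex.arg (c * c) = Complex.arg c + Complex.arg c := by
    apply Complex.arg_mul hcne hcne
    constructor
    · linarith [Real.pi_pos]
    · linarith [Real.pi_pos]
  rw [harg] at hv
  constructor <;> linarith


/-- For `z` in the unit disk, with principal branches,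
`f(z) = 2z (i z + (1-z²)^{1/2})^i / (1 + (1-z²)^{1/2})` is well defined and holomorphic
on the disk, `f(0) = 0`, `f'(0) = 1`, and `f(z)/(z f'(z)) = ((1+z)/(1-z))^{1/2}` for
`z ≠ 0`; moreover `Re((1+z)/(1-z)) > 0`, so `|arg(f(z)/(z f'(z)))| < π/4`. -/
theorem stmt_14 :
    (∀ z ∈ Metric.ball (0 : ℂ) 1, 1 + (1 - z ^ 2) ^ ((1 : ℂ) / 2) ≠ 0) ∧
    DifferentiableOn ℂ
      (fun z : ℂ => 2 * z * (Complex.I * z + (1 - z ^ 2) ^ ((1 : ℂ) / 2)) ^ Complex.I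
          / (1 + (1 - z ^ 2) ^ ((1 : ℂ) / 2)))
      (Metric.ball 0 1) ∧
    (fun z : ℂ => 2 * z * (Complex.I * z + (1 - z ^ 2) ^ ((1 : ℂ) / 2)) ^ Complex.I
          / (1 + (1 - z ^ 2) ^ ((1 : ℂ) / 2))) 0 = 0 ∧
    deriv (fun z : ℂ => 2 * z * (Complex.I * z + (1 - z ^ 2) ^ ((1 : ℂ) / 2)) ^ Complex.I
          / (1 + (1 - z ^ 2) ^ ((1 : ℂ) / 2))) 0 = 1 ∧
    (∀ z ∈ Metric.ball (0 : ℂ) 1, z ≠ 0 →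
        (fun z : ℂ => 2 * z * (Complex.I * z + (1 - z ^ 2) ^ ((1 : ℂ) / 2)) ^ Complex.I
            / (1 + (1 - z ^ 2) ^ ((1 : ℂ) / 2))) z
          / (z * deriv (fun z : ℂ =>
              2 * z * (Complex.I * z + (1 - z ^ 2) ^ ((1 : ℂ) / 2)) ^ Complex.I
                / (1 + (1 - z ^ 2) ^ ((1 : ℂ) / 2))) z)
          = ((1 + z) / (1 - z)) ^ ((1 : ℂ) / 2)) ∧
    (∀ z ∈ Metric.ball (0 : ℂ) 1, 0 < ((1 + z) / (1 - z)).re) ∧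
    (∀ z ∈ Metric.ball (0 : ℂ) 1, z ≠ 0 →
        |Complex.arg ((fun z : ℂ =>
            2 * z * (Complex.I * z + (1 - z ^ 2) ^ ((1 : ℂ) / 2)) ^ Complex.I
              / (1 + (1 - z ^ 2) ^ ((1 : ℂ) / 2))) z
          / (z * deriv (fun z : ℂ =>
              2 * z * (Complex.I * z + (1 - z ^ 2) ^ ((1 : ℂ) / 2)) ^ Complex.I
                / (1 + (1 - z ^ 2) ^ ((1 : ℂ) / 2))) z))| < Real.pi / 4) := by
  have hball : ∀ z : ℂ, z ∈ Metric.ball (0 : ℂ) 1 → ‖z‖ < 1 := by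
    intro z hz; rwa [mem_ball_zero_iff] at hz
  have key : ∀ z ∈ Metric.ball (0 : ℂ) 1, z ≠ 0 →
      (fun z : ℂ => 2 * z * (Complex.I * z + (1 - z ^ 2) ^ ((1 : ℂ) / 2)) ^ Complex.I
            / (1 + (1 - z ^ 2) ^ ((1 : ℂ) / 2))) z
          / (z * deriv (fun z : ℂ =>
              2 * z * (Complex.I * z + (1 - z ^ 2) ^ ((1 : ℂ) / 2)) ^ Complex.I
                / (1 + (1 - z ^ 2) ^ ((1 : ℂ) / 2))) z)
          = ((1 + z) / (1 - z)) ^ ((1 : ℂ) / 2) := by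
    intro z hz hz0
    have hb := hball z hz
    rw [(hasDerivAt_F hb).deriv]
    rw [← sqrt_id hb]
    simp only
    set s := (1 - z ^ 2) ^ ((1:ℂ)/2) with hsdef
    set A := (Complex.I * z + s) ^ Complex.I with hAdef
    have hA : A ≠ 0 := by
      rw [hAdef, Ne, Complex.cpow_eq_zero_iff]
      push_neg
      intro h
      exact absurd h w_ne_zero
    have hsne : s ≠ 0 := s_ne_zero hb
    have h1s : (1:ℂ) + s ≠ 0 := one_add_s_ne_zero hb
    have h1z : (1:ℂ) - z ≠ 0 := one_sub_ne hb
    have hD : z * (2 * A * (1 - z) / (s * (1 + s))) ≠ 0 :=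
      mul_ne_zero hz0 (div_ne_zero
        (mul_ne_zero (mul_ne_zero two_ne_zero hA) h1z) (mul_ne_zero hsne h1s))
    rw [div_eq_div_iff hD h1z]
    field_simp
  refine ⟨fun z hz => one_add_s_ne_zero (hball z hz),
    fun z hz => ((hasDerivAt_F (hball z hz)).differentiableAt).differentiableWithinAt,
    by norm_num, ?_, key, fun z hz => re_v_pos (hball z hz), ?_⟩
  · rw [(hasDerivAt_F (by norm_num : ‖(0:ℂ)‖ < 1)).deriv]
    norm_num [Complex.one_cpow]
  · intro z hz hz0
    rw [key z hz hz0]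
    exact abs_arg_lt_pi_div_four (hball z hz)


end
end

section
/- Let k ∈ (0,1), ρ := exp((1/k − 1)/2), and let μ : Δ → ℂ be defined by μ(z) = −k·(z⁴/|z|⁴)·(ρ + conj(z))/(ρ + z) for 1 < |z| < ρ, and μ(z) = −k·z³/|z|³ for |z| ≥ ρ. Let (φ_n) be a sequence of functions holomorphic on Δ with ∬_Δ |φ_n(z)| dA(z) ≤ 1 for all n, converging to 0 locally uniformly on Δ. Then ∬_Δ φ_n(z)·μ(z) dA(z) → 0 as n → ∞. -/
open MeasureTheory Filter

noncomputable section

/-- The Beltrami coefficient of the Becker extension of the extremal function for the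
third-coefficient problem: `μ(z) = -k (z⁴/|z|⁴)(ρ + conj z)/(ρ + z)` for `1 < |z| < ρ`
and `μ(z) = -k z³/|z|³` for `|z| ≥ ρ`. -/
def extremalMu (k ρ : ℝ) (z : ℂ) : ℂ :=
  if ‖z‖ < ρ then
    -(k : ℂ) * (z ^ 4 / ((‖z‖ : ℂ)) ^ 4) *
      (((ρ : ℂ) + (starRingEnd ℂ) z) / ((ρ : ℂ) + z))
  else
    -(k : ℂ) * (z ^ 3 / ((‖z‖ : ℂ)) ^ 3)

section Aux

open Set Metric

lemma polar_symm_eq_circleMap (r θ : ℝ) :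
    Complex.polarCoord.symm (r, θ) = circleMap 0 r θ := by
  rw [Complex.polarCoord_symm_apply, circleMap_zero, Complex.exp_mul_I]
  push_cast
  ring

lemma integrableOn_polar_real {f : ℝ × ℝ → ℂ} (hf : Integrable f) :
    IntegrableOn (fun p : ℝ × ℝ => p.1 • f (polarCoord.symm p)) polarCoord.target := by
  set B : ℝ × ℝ → ℝ × ℝ →L[ℝ] ℝ × ℝ := fun p =>
    LinearMap.toContinuousLinearMap (Matrix.toLin (Module.Basis.finTwoProd ℝ) (Module.Basis.finTwoProd ℝ)
      !![Real.cos p.2, -p.1 * Real.sin p.2; Real.sin p.2, p.1 * Real.cos p.2])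
  have hB : ∀ p ∈ polarCoord.target,
      HasFDerivWithinAt polarCoord.symm (B p) polarCoord.target p :=
    fun p _ => (hasFDerivAt_polarCoord_symm p).hasFDerivWithinAt
  have B_det : ∀ p, (B p).det = p.1 := by
    intro p
    conv_rhs => rw [← one_mul p.1, ← Real.cos_sq_add_sin_sq p.2]
    simp only [B, neg_mul, LinearMap.det_toContinuousLinearMap, LinearMap.det_toLin,
      Matrix.det_fin_two_of, sub_neg_eq_add]
    ring
  have hinj : Set.InjOn polarCoord.symm polarCoord.target := by
    simpa using polarCoord.symm.injOn
  have h1 : IntegrableOn f polarCoord.source := hf.integrableOn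
  rw [← polarCoord.symm_image_target_eq_source] at h1
  rw [integrableOn_image_iff_integrableOn_abs_det_fderiv_smul volume
      polarCoord.open_target.measurableSet hB hinj f] at h1
  apply h1.congr_fun _ polarCoord.open_target.measurableSet
  intro p hp
  show |(B p).det| • f (polarCoord.symm p) = p.1 • f (polarCoord.symm p)
  rw [B_det, abs_of_pos hp.1]

lemma complex_polar_symm_eq (p : ℝ × ℝ) :
    Complex.polarCoord.symm p = Complex.measurableEquivRealProd.symm (polarCoord.symm p) := by
  rw [Complex.polarCoord_symm_apply, Complex.measurableEquivRealProd_symm_apply]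
  apply Complex.ext <;>
    simp [polarCoord_symm_apply, -Complex.ofReal_cos, -Complex.ofReal_sin]

lemma integrableOn_polar {f : ℂ → ℂ} (hf : Integrable f) :
    IntegrableOn (fun p : ℝ × ℝ => p.1 • f (Complex.polarCoord.symm p))
      Complex.polarCoord.target := by
  have h0 : Integrable (fun p : ℝ × ℝ => f (Complex.measurableEquivRealProd.symm p)) :=
    ((Complex.volume_preserving_equiv_real_prod.symm).integrable_comp_emb
      Complex.measurableEquivRealProd.symm.measurableEmbedding).2 hf
  have h2 := integrableOn_polar_real h0
  have htar : Complex.polarCoord.target = polarCoord.target := rfl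
  rw [htar]
  apply h2.congr_fun _ polarCoord.open_target.measurableSet
  intro p _
  show p.1 • f (Complex.measurableEquivRealProd.symm (polarCoord.symm p))
      = p.1 • f (Complex.polarCoord.symm p)
  rw [complex_polar_symm_eq]

lemma angular_integral (r : ℝ) (hr : 0 < r) (W : ℂ → ℂ) :
    (∫ θ in Ioo (-Real.pi) Real.pi, W (circleMap 0 r θ)) =
      -Complex.I * ∮ z in C(0, r), W z / z := by
  have h1 : (∮ z in C(0, r), W z / z)
      = ∫ θ in (0:ℝ)..2*Real.pi, Complex.I * W (circleMap 0 r θ) := by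
    rw [circleIntegral]
    apply intervalIntegral.integral_congr
    intro θ _
    have hz : circleMap 0 r θ ≠ 0 := circleMap_ne_center hr.ne'
    show deriv (circleMap 0 r) θ • (W (circleMap 0 r θ) / circleMap 0 r θ)
        = Complex.I * W (circleMap 0 r θ)
    rw [deriv_circleMap, smul_eq_mul]
    field_simp
  have hper : Function.Periodic (fun θ => W (circleMap 0 r θ)) (2*Real.pi) :=
    fun θ => congrArg W (periodic_circleMap 0 r θ)
  have h2 : (∫ θ in Ioo (-Real.pi) Real.pi, W (circleMap 0 r θ))
      = ∫ θ in (0:ℝ)..2*Real.pi, W (circleMap 0 r θ) := by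
    rw [← MeasureTheory.integral_Ioc_eq_integral_Ioo,
      ← intervalIntegral.integral_of_le (by linarith [Real.pi_pos] : -Real.pi ≤ Real.pi)]
    have h := hper.intervalIntegral_add_eq (-Real.pi) 0
    rw [show -Real.pi + 2*Real.pi = Real.pi by ring, zero_add] at h
    exact h
  rw [h2, h1, intervalIntegral.integral_const_mul, ← mul_assoc, neg_mul, Complex.I_mul_I,
    neg_neg, one_mul]

lemma deform_annulus {F : ℂ → ℂ} {V : Set ℂ} (hV : IsOpen V) (hF : DifferentiableOn ℂ F V)
    {a b : ℝ} (ha : 0 < a) (hab : a ≤ b)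
    (hsub : ∀ z : ℂ, a ≤ ‖z‖ → ‖z‖ ≤ b → z ∈ V) :
    (∮ z in C(0, b), F z) = ∮ z in C(0, a), F z := by
  have hsub' : closedBall (0:ℂ) b \ ball 0 a ⊆ V := by
    intro z hz
    refine hsub z ?_ ?_
    · have := hz.2
      simp only [mem_ball, Complex.dist_eq, sub_zero, not_lt] at this
      exact this
    · have := hz.1
      simpa [Complex.dist_eq] using this
  apply Complex.circleIntegral_eq_of_differentiable_on_annulus_off_countable ha hab
    Set.countable_empty (hF.continuousOn.mono hsub')
  intro z hz
  refine hF.differentiableAt (hV.mem_nhds (hsub' ?_))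
  exact ⟨ball_subset_closedBall hz.1.1, fun h => hz.1.2 (ball_subset_closedBall h)⟩

lemma extremalMu_norm_le {k ρ : ℝ} (hk : 0 ≤ k) (hρ : 1 < ρ) {z : ℂ}
    (hz : 1 < ‖z‖) : ‖extremalMu k ρ z‖ ≤ k := by
  have hz0 : z ≠ 0 := by
    intro h; rw [h] at hz; simp at hz; linarith
  have habs : ‖z‖ ≠ 0 := norm_ne_zero_iff.2 hz0
  unfold extremalMu
  split_ifs with h
  · have hne : (ρ:ℂ) + z ≠ 0 := by
      intro hzz
      have hz' : z = -(ρ:ℂ) := by linear_combination hzz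
      rw [hz'] at h
      simp only [norm_neg] at h
      rw [Complex.norm_real, Real.norm_eq_abs, abs_of_pos (by linarith : (0:ℝ) < ρ)] at h
      exact lt_irrefl _ h
    rw [norm_mul, norm_mul]
    have h1 : ‖(-(k:ℂ))‖ = k := by
      simpa using abs_of_nonneg hk
    have h2 : ‖z^4 / ((‖z‖ : ℂ))^4‖ = 1 := by
      rw [norm_div, norm_pow, norm_pow, Complex.norm_real, Real.norm_eq_abs,
        abs_of_nonneg (norm_nonneg z)]
      field_simp
    have h3 : ‖((ρ:ℂ) + (starRingEnd ℂ) z) / ((ρ:ℂ) + z)‖ = 1 := by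
      have hc : (ρ:ℂ) + (starRingEnd ℂ) z = (starRingEnd ℂ) ((ρ:ℂ) + z) := by
        rw [map_add, Complex.conj_ofReal]
      rw [hc, norm_div, RCLike.norm_conj, div_self (norm_ne_zero_iff.2 hne)]
    rw [h1, h2, h3, mul_one, mul_one]
  · rw [norm_mul]
    have h1 : ‖(-(k:ℂ))‖ = k := by simpa using abs_of_nonneg hk
    have h2 : ‖z^3 / ((‖z‖ : ℂ))^3‖ = 1 := by
      rw [norm_div, norm_pow, norm_pow, Complex.norm_real, Real.norm_eq_abs,
        abs_of_nonneg (norm_nonneg z)]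
      field_simp
    rw [h1, h2, mul_one]

lemma extremalMu_measurable (k ρ : ℝ) : Measurable (extremalMu k ρ) := by
  have habs : Measurable (fun z : ℂ => ((‖z‖ : ℝ) : ℂ)) :=
    Complex.measurable_ofReal.comp continuous_norm.measurable
  unfold extremalMu
  refine Measurable.ite (measurableSet_lt continuous_norm.measurable measurable_const) ?_ ?_
  · exact (measurable_const.mul ((measurable_id.pow_const 4).div (habs.pow_const 4))).mul
      ((measurable_const.add Complex.continuous_conj.measurable).div (measurable_const.add measurable_id))
  · exact measurable_const.mul ((measurable_id.pow_const 3).div (habs.pow_const 3))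

lemma key_bound (k ρ : ℝ) (hk : 0 < k) (hρ : 1 < ρ) :
    ∃ C : ℝ, 0 ≤ C ∧ ∀ (ψ : ℂ → ℂ) (ε : ℝ), 0 ≤ ε →
      DifferentiableOn ℂ ψ {z : ℂ | 1 < ‖z‖} →
      IntegrableOn ψ {z : ℂ | 1 < ‖z‖} volume →
      (∀ z ∈ sphere (0:ℂ) ((1+ρ)/2), ‖ψ z‖ ≤ ε) →
      ‖∫ z in {z : ℂ | 1 < ‖z‖}, ψ z * extremalMu k ρ z‖ ≤ C * ε := by
  set s₀ : ℝ := (1+ρ)/2 with hs₀def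
  have hs₀1 : 1 < s₀ := by rw [hs₀def]; linarith
  have hs₀ρ : s₀ < ρ := by rw [hs₀def]; linarith
  have hs₀0 : (0:ℝ) < s₀ := by linarith
  set Cρ : ℝ := ∫ r in Ici ρ, (r^2)⁻¹ with hCρdef
  have hCρ0 : 0 ≤ Cρ := setIntegral_nonneg measurableSet_Ici fun r _ => by positivity
  set D₁ : ℝ := k * (s₀^2 * (ρ*s₀+ρ^2) / (ρ - s₀)) with hD₁def
  have hD₁0 : 0 ≤ D₁ := by
    have h1 : (0:ℝ) < ρ - s₀ := by linarith
    have h2 : (0:ℝ) ≤ ρ*s₀+ρ^2 := by nlinarith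
    positivity
  have hCpos : 0 ≤ 2*Real.pi*s₀*D₁*(ρ-1) + Cρ * (k * (2*Real.pi*s₀*s₀^2)) := by
    have h1 : 0 ≤ 2*Real.pi*s₀*D₁*(ρ-1) := by
      have : (0:ℝ) ≤ 2*Real.pi*s₀ := by positivity
      have h2 : (0:ℝ) ≤ ρ - 1 := by linarith
      exact mul_nonneg (mul_nonneg this hD₁0) h2
    have h2 : 0 ≤ Cρ * (k * (2*Real.pi*s₀*s₀^2)) := mul_nonneg hCρ0 (by positivity)
    linarith
  refine ⟨2*Real.pi*s₀*D₁*(ρ-1) + Cρ * (k * (2*Real.pi*s₀*s₀^2)), hCpos,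
    fun ψ ε hε hd hi hsup => ?_⟩
  set S : Set ℂ := {z : ℂ | 1 < ‖z‖} with hSdef
  have hSopen : IsOpen S := isOpen_lt continuous_const continuous_norm
  have hSmeas : MeasurableSet S := hSopen.measurableSet
  have hAopen : IsOpen {z : ℂ | 1 < ‖z‖ ∧ ‖z‖ < ρ} :=
    (isOpen_lt continuous_const continuous_norm).inter
      (isOpen_lt continuous_norm continuous_const)
  -- integrability of the product
  have hμint : IntegrableOn (fun z => ψ z * extremalMu k ρ z) S volume := by
    refine Integrable.mono' ((hi.norm.const_mul k)) ?_ ?_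
    · exact hi.aestronglyMeasurable.mul (extremalMu_measurable k ρ).aestronglyMeasurable
    · filter_upwards [ae_restrict_mem hSmeas] with z hz
      rw [norm_mul]
      calc ‖ψ z‖ * ‖extremalMu k ρ z‖ ≤ ‖ψ z‖ * k := by
            have := extremalMu_norm_le hk.le hρ (hz : 1 < ‖z‖)
            exact mul_le_mul_of_nonneg_left this (norm_nonneg _)
        _ = k * ‖ψ z‖ := mul_comm _ _
  set f : ℂ → ℂ := S.indicator (fun z => ψ z * extremalMu k ρ z) with hfdef
  have hf : Integrable f volume := hμint.integrable_indicator hSmeas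
  -- convert to polar coordinates
  have e1 : (∫ z in S, ψ z * extremalMu k ρ z) = ∫ z, f z := (integral_indicator hSmeas).symm
  have e2 : (∫ z, f z)
      = ∫ p in Complex.polarCoord.target, p.1 • f (Complex.polarCoord.symm p) :=
    (Complex.integral_comp_polarCoord_symm f).symm
  have hgi : IntegrableOn (fun p : ℝ × ℝ => p.1 • f (Complex.polarCoord.symm p))
      Complex.polarCoord.target volume := integrableOn_polar hf
  set inn : ℝ → ℂ :=
    fun x => ∫ y in Ioo (-Real.pi) Real.pi, x • f (Complex.polarCoord.symm (x, y)) with hinndef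
  have e3 : (∫ p in Complex.polarCoord.target, p.1 • f (Complex.polarCoord.symm p))
      = ∫ x in Ioi (0:ℝ), inn x := by
    rw [Complex.polarCoord_target]
    rw [Complex.polarCoord_target] at hgi
    exact setIntegral_prod _ hgi
  have hprod : Integrable (fun p : ℝ × ℝ => p.1 • f (Complex.polarCoord.symm p))
      ((volume.restrict (Ioi (0:ℝ))).prod (volume.restrict (Ioo (-Real.pi) Real.pi))) := by
    rw [Measure.prod_restrict]
    rw [Complex.polarCoord_target] at hgi
    exact hgi
  have hinn_int : IntegrableOn inn (Ioi (0:ℝ)) volume := hprod.integral_prod_left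
  -- the inner integral as a circle integral
  have hinncirc : ∀ x : ℝ, 0 < x →
      inn x = -Complex.I * ∮ z in C(0, x), ((x:ℝ) • f z) / z := by
    intro x hx
    have : inn x
        = ∫ y in Ioo (-Real.pi) Real.pi, (fun w => (x:ℝ) • f w) (circleMap 0 x y) := by
      rw [hinndef]
      refine setIntegral_congr_fun measurableSet_Ioo fun y _ => ?_
      rw [polar_symm_eq_circleMap]
    rw [this]; exact angular_integral x hx (fun w => (x:ℝ) • f w)
  -- vanishing for small radii
  have hinn0 : ∀ x ∈ Ioc (0:ℝ) 1, inn x = 0 := by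
    intro x hx
    rw [hinndef]
    refine setIntegral_eq_zero_of_forall_eq_zero fun y _ => ?_
    have hmem : Complex.polarCoord.symm (x, y) ∉ S := by
      rw [hSdef]
      simp only [Set.mem_setOf_eq, not_lt, Complex.norm_polarCoord_symm]
      rw [abs_of_pos hx.1]
      exact hx.2
    rw [hfdef, Set.indicator_of_notMem hmem, smul_zero]
  -- region C : r ≥ ρ
  set q₃ : ℂ := ∮ z in C(0, s₀), ψ z * z^2 with hq₃def
  have hq₃ : ‖q₃‖ ≤ 2*Real.pi*s₀*(ε*s₀^2) := by
    refine circleIntegral.norm_integral_le_of_norm_le_const hs₀0.le fun z hz => ?_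
    have hznorm : ‖z‖ = s₀ := mem_sphere_zero_iff_norm.1 hz
    rw [norm_mul, norm_pow, hznorm]
    exact mul_le_mul_of_nonneg_right (hsup z hz) (by positivity)
  have hC : ∀ r ∈ Ici ρ, inn r = ((r^2)⁻¹ : ℝ) • (Complex.I * k * q₃) := by
    intro r hr
    have hρ0 : (0:ℝ) < ρ := by linarith
    have hr0 : (0:ℝ) < r := lt_of_lt_of_le hρ0 hr
    have hr1 : (1:ℝ) < r := lt_of_lt_of_le hρ hr
    rw [hinncirc r hr0]
    have heq : Set.EqOn (fun z => ((r:ℝ) • f z) / z)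
        (fun z => (-(k:ℂ) * ((r:ℂ)^2)⁻¹) * (ψ z * z^2)) (sphere (0:ℂ) r) := by
      intro z hz
      have hznorm : ‖z‖ = r := mem_sphere_zero_iff_norm.1 hz
      have habs : ‖z‖ = r := by exact hznorm
      have hz0 : z ≠ 0 := by
        intro h; rw [h] at hznorm; simp at hznorm; exact hr0.ne' hznorm.symm
      have hzS : z ∈ S := by rw [hSdef]; simp only [Set.mem_setOf_eq, habs]; exact hr1
      show ((r:ℝ) • f z) / z = (-(k:ℂ) * ((r:ℂ)^2)⁻¹) * (ψ z * z^2)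
      rw [hfdef, Set.indicator_of_mem hzS]
      simp only [extremalMu]
      rw [if_neg (by rw [habs]; exact not_lt.2 hr)]
      rw [habs, Complex.real_smul]
      have hrC : (r:ℂ) ≠ 0 := Complex.ofReal_ne_zero.2 hr0.ne'
      field_simp
    rw [circleIntegral.integral_congr hr0.le heq]
    have hdif : DifferentiableOn ℂ (fun z => (-(k:ℂ) * ((r:ℂ)^2)⁻¹) * (ψ z * z^2)) S :=
      (hd.mul (differentiable_pow 2).differentiableOn).const_mul _
    have hdef : (∮ z in C(0, r), (-(k:ℂ) * ((r:ℂ)^2)⁻¹) * (ψ z * z^2))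
        = ∮ z in C(0, s₀), (-(k:ℂ) * ((r:ℂ)^2)⁻¹) * (ψ z * z^2) := by
      refine deform_annulus hSopen hdif hs₀0 (le_trans hs₀ρ.le hr) fun z h1 h2 => ?_
      rw [hSdef]; simp only [Set.mem_setOf_eq]; linarith
    rw [hdef, circleIntegral.integral_const_mul]
    rw [← hq₃def, Complex.real_smul]
    push_cast
    ring
  -- region A : 1 < r < ρ
  have hA : ∀ r ∈ Ioo (1:ℝ) ρ, ‖inn r‖ ≤ 2*Real.pi*s₀*(ε*D₁) := by
    intro r hr
    have hr1 : (1:ℝ) < r := hr.1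
    have hr2 : r < ρ := hr.2
    have hr0 : (0:ℝ) < r := by linarith
    have hρ0 : (0:ℝ) < ρ := by linarith
    set G : ℂ → ℂ := fun z =>
      (-(k:ℂ) * ((r:ℂ)^3)⁻¹) * (ψ z * z^2 * ((ρ:ℂ)*z + (r:ℂ)^2) / ((ρ:ℂ) + z)) with hGdef
    have hne : ∀ z : ℂ, ‖z‖ < ρ → (ρ:ℂ) + z ≠ 0 := by
      intro z hzρ hzz
      have hz' : z = -(ρ:ℂ) := by linear_combination hzz
      rw [hz'] at hzρ
      simp only [norm_neg] at hzρ
      rw [Complex.norm_real, Real.norm_eq_abs, abs_of_pos hρ0] at hzρ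
      exact lt_irrefl _ hzρ
    have heq : Set.EqOn (fun z => ((r:ℝ) • f z) / z) G (sphere (0:ℂ) r) := by
      intro z hz
      have hznorm : ‖z‖ = r := mem_sphere_zero_iff_norm.1 hz
      have habs : ‖z‖ = r := by exact hznorm
      have hz0 : z ≠ 0 := by
        intro h; rw [h] at hznorm; simp at hznorm; exact hr0.ne' hznorm.symm
      have hzS : z ∈ S := by rw [hSdef]; simp only [Set.mem_setOf_eq, habs]; exact hr1
      have hconj : (starRingEnd ℂ) z = ((r:ℂ))^2 / z := by
        rw [eq_div_iff hz0, mul_comm]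
        rw [Complex.mul_conj, Complex.normSq_eq_norm_sq, habs]
        push_cast
        ring
      show ((r:ℝ) • f z) / z = G z
      rw [hfdef, Set.indicator_of_mem hzS, hGdef]
      simp only [extremalMu]
      rw [if_pos (by rw [habs]; exact hr2)]
      rw [habs, hconj, Complex.real_smul]
      have hrC : (r:ℂ) ≠ 0 := Complex.ofReal_ne_zero.2 hr0.ne'
      have hnez : (ρ:ℂ) + z ≠ 0 := hne z (by rw [habs]; exact hr2)
      field_simp
    have hGdif : DifferentiableOn ℂ G {z : ℂ | 1 < ‖z‖ ∧ ‖z‖ < ρ} := by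
      rw [hGdef]
      refine DifferentiableOn.const_mul ?_ _
      refine DifferentiableOn.div ?_ ?_ ?_
      · exact ((hd.mono fun z hz => hz.1).mul
          (differentiable_pow 2).differentiableOn).mul
          (((differentiable_const _).mul differentiable_id).add
            (differentiable_const _)).differentiableOn
      · exact ((differentiable_const _).add differentiable_id).differentiableOn
      · exact fun z hz => hne z hz.2
    have hdef : (∮ z in C(0, r), G z) = ∮ z in C(0, s₀), G z := by
      rcases le_total s₀ r with hle | hle
      · refine deform_annulus hAopen hGdif hs₀0 hle fun z h1 h2 => ?_
        constructor
        · linarith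
        · linarith
      · refine (deform_annulus hAopen hGdif hr0 hle fun z h1 h2 => ?_).symm
        constructor
        · linarith
        · linarith
    rw [hinncirc r hr0, circleIntegral.integral_congr hr0.le heq, hdef]
    rw [norm_mul, norm_neg, Complex.norm_I, one_mul]
    refine circleIntegral.norm_integral_le_of_norm_le_const hs₀0.le fun z hz => ?_
    have hznorm : ‖z‖ = s₀ := mem_sphere_zero_iff_norm.1 hz
    have habs : ‖z‖ = s₀ := by exact hznorm
    rw [hGdef]
    have h1 : ‖(-(k:ℂ) * ((r:ℂ)^3)⁻¹)‖ ≤ k := by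
      rw [norm_mul, norm_neg, norm_inv, norm_pow, Complex.norm_real, Complex.norm_real,
        Real.norm_eq_abs, Real.norm_eq_abs, abs_of_pos hk, abs_of_pos hr0]
      have h3 : (1:ℝ) ≤ r^3 := by nlinarith [hr1, sq_nonneg r, sq_nonneg (r-1)]
      calc k * (r^3)⁻¹ ≤ k * 1 := by
            refine mul_le_mul_of_nonneg_left ?_ hk.le
            rw [inv_le_one_iff₀]
            right; exact h3
        _ = k := mul_one k
    have hb : ‖(ρ:ℂ)*z + (r:ℂ)^2‖ ≤ ρ*s₀ + ρ^2 := by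
      refine (norm_add_le _ _).trans ?_
      rw [norm_mul, norm_pow, Complex.norm_real, Real.norm_eq_abs, abs_of_pos hρ0,
        hznorm, Complex.norm_real, Real.norm_eq_abs, abs_of_pos hr0]
      have : r^2 ≤ ρ^2 := by nlinarith
      linarith
    have hden : ρ - s₀ ≤ ‖(ρ:ℂ) + z‖ := by
      have h4 : ‖(ρ:ℂ)‖ ≤ ‖(ρ:ℂ) + z‖ + ‖z‖ := by
        have := norm_add_le ((ρ:ℂ) + z) (-z)
        simpa using this
      rw [Complex.norm_real, Real.norm_eq_abs, abs_of_pos hρ0] at h4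
      rw [hznorm] at h4
      linarith
    have hnum : ‖ψ z * z^2 * ((ρ:ℂ)*z + (r:ℂ)^2)‖ ≤ ε * s₀^2 * (ρ*s₀ + ρ^2) := by
      rw [norm_mul, norm_mul, norm_pow, hznorm]
      have hψz := hsup z hz
      refine mul_le_mul ?_ hb (norm_nonneg _) (by positivity)
      exact mul_le_mul_of_nonneg_right hψz (by positivity)
    calc ‖(-(k:ℂ) * ((r:ℂ)^3)⁻¹) * (ψ z * z^2 * ((ρ:ℂ)*z + (r:ℂ)^2) / ((ρ:ℂ) + z))‖
        = ‖(-(k:ℂ) * ((r:ℂ)^3)⁻¹)‖ * (‖ψ z * z^2 * ((ρ:ℂ)*z + (r:ℂ)^2)‖ / ‖(ρ:ℂ) + z‖) := by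
          rw [norm_mul, norm_div]
      _ ≤ k * ((ε * s₀^2 * (ρ*s₀ + ρ^2)) / (ρ - s₀)) := by
          refine mul_le_mul h1 ?_ (by positivity) hk.le
          exact div_le_div₀ (by positivity) hnum (by linarith) hden
      _ = ε * D₁ := by rw [hD₁def]; ring
  -- assemble
  rw [e1, e2, e3]
  have hIoi : (Ioi (0:ℝ)) = Ioc 0 1 ∪ Ioi 1 := (Ioc_union_Ioi_eq_Ioi zero_le_one).symm
  have hIoi1 : (Ioi (1:ℝ)) = Ioo 1 ρ ∪ Ici ρ := (Ioo_union_Ici_eq_Ioi hρ).symm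
  have e4 : (∫ x in Ioi (0:ℝ), inn x) = (∫ x in Ioc (0:ℝ) 1, inn x) + ∫ x in Ioi (1:ℝ), inn x := by
    rw [hIoi]
    exact setIntegral_union (Ioc_disjoint_Ioi le_rfl) measurableSet_Ioi
      (hinn_int.mono_set Ioc_subset_Ioi_self)
      (hinn_int.mono_set (Ioi_subset_Ioi zero_le_one))
  have e5 : (∫ x in Ioi (1:ℝ), inn x) = (∫ x in Ioo (1:ℝ) ρ, inn x) + ∫ x in Ici ρ, inn x := by
    rw [hIoi1]
    refine setIntegral_union ?_ measurableSet_Ici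
      ((hinn_int.mono_set (Ioi_subset_Ioi zero_le_one)).mono_set Ioo_subset_Ioi_self)
      ((hinn_int.mono_set (Ioi_subset_Ioi zero_le_one)).mono_set
        (fun x hx => lt_of_lt_of_le hρ hx))
    rw [Set.disjoint_left]
    intro x hx hx'
    exact absurd (lt_of_lt_of_le hx.2 hx') (lt_irrefl x)
  have e6 : (∫ x in Ioc (0:ℝ) 1, inn x) = 0 := setIntegral_eq_zero_of_forall_eq_zero hinn0
  rw [e4, e5, e6, zero_add]
  have b1 : ‖∫ x in Ioo (1:ℝ) ρ, inn x‖ ≤ (2*Real.pi*s₀*(ε*D₁)) * (ρ - 1) := by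
    have := norm_setIntegral_le_of_norm_le_const (μ := volume) (s := Ioo (1:ℝ) ρ)
      (C := 2*Real.pi*s₀*(ε*D₁)) (by rw [Real.volume_Ioo]; exact ENNReal.ofReal_lt_top)
      hA
    rwa [measureReal_def, Real.volume_Ioo, ENNReal.toReal_ofReal (by linarith)] at this
  have b2 : ‖∫ x in Ici ρ, inn x‖ ≤ Cρ * (k * (2*Real.pi*s₀*(ε*s₀^2))) := by
    have e7 : (∫ x in Ici ρ, inn x) = (∫ r in Ici ρ, (r^2)⁻¹) • (Complex.I * k * q₃) := by
      rw [setIntegral_congr_fun measurableSet_Ici hC]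
      exact integral_smul_const _ _
    rw [e7, ← hCρdef]
    rw [norm_smul, Real.norm_eq_abs, abs_of_nonneg hCρ0]
    refine mul_le_mul_of_nonneg_left ?_ hCρ0
    rw [norm_mul, norm_mul, Complex.norm_I, one_mul, Complex.norm_real, Real.norm_eq_abs,
      abs_of_pos hk]
    exact mul_le_mul_of_nonneg_left hq₃ hk.le
  calc ‖(∫ x in Ioo (1:ℝ) ρ, inn x) + ∫ x in Ici ρ, inn x‖
      ≤ ‖∫ x in Ioo (1:ℝ) ρ, inn x‖ + ‖∫ x in Ici ρ, inn x‖ := norm_add_le _ _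
    _ ≤ (2*Real.pi*s₀*(ε*D₁)) * (ρ - 1) + Cρ * (k * (2*Real.pi*s₀*(ε*s₀^2))) := by
        exact add_le_add b1 b2
    _ = (2*Real.pi*s₀*D₁*(ρ-1) + Cρ * (k * (2*Real.pi*s₀*s₀^2))) * ε := by ring


end Aux

/-- With `ρ = exp((1/k - 1)/2)` and `μ` as above on `Δ = {|z| > 1}`:
for any sequence `(φ_n)` of holomorphic functions on `Δ` with `∬_Δ |φ_n| dA ≤ 1`
converging to `0` locally uniformly on `Δ`, one has `∬_Δ φ_n μ dA → 0`. -/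
theorem stmt_15 (k : ℝ) (hk0 : 0 < k) (hk1 : k < 1)
    (φ : ℕ → ℂ → ℂ)
    (hhol : ∀ n, DifferentiableOn ℂ (φ n) {z : ℂ | 1 < ‖z‖})
    (hint : ∀ n, IntegrableOn (φ n) {z : ℂ | 1 < ‖z‖} volume)
    (hbd : ∀ n, (∫ z in {z : ℂ | 1 < ‖z‖}, ‖φ n z‖) ≤ 1)
    (hconv : TendstoLocallyUniformlyOn φ 0 atTop {z : ℂ | 1 < ‖z‖}) :
    Tendsto
      (fun n => ∫ z in {z : ℂ | 1 < ‖z‖},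
          φ n z * extremalMu k (Real.exp ((1 / k - 1) / 2)) z)
      atTop (nhds 0) := by
  set ρ : ℝ := Real.exp ((1 / k - 1) / 2) with hρdef
  have hρ : 1 < ρ := by
    rw [hρdef]
    have h1 : 1 < 1 / k := one_lt_one_div hk0 hk1
    have : (0:ℝ) < (1 / k - 1) / 2 := by linarith
    calc (1:ℝ) = Real.exp 0 := Real.exp_zero.symm
      _ < Real.exp ((1 / k - 1) / 2) := Real.exp_lt_exp.2 this
  obtain ⟨C, hC0, hkey⟩ := key_bound k ρ hk0 hρ
  have hSopen : IsOpen {z : ℂ | 1 < ‖z‖} :=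
    isOpen_lt continuous_const continuous_norm
  have hs₀1 : 1 < (1+ρ)/2 := by linarith
  have hsub : Metric.sphere (0:ℂ) ((1+ρ)/2) ⊆ {z : ℂ | 1 < ‖z‖} := by
    intro z hz
    have h : ‖z‖ = (1+ρ)/2 := mem_sphere_zero_iff_norm.1 hz
    simp only [Set.mem_setOf_eq, h]
    exact hs₀1
  have huni : TendstoUniformlyOn φ 0 atTop (Metric.sphere (0:ℂ) ((1+ρ)/2)) :=
    (tendstoLocallyUniformlyOn_iff_forall_isCompact hSopen).1 hconv _ hsub
      (isCompact_sphere 0 _)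
  rw [NormedAddCommGroup.tendsto_nhds_zero]
  intro ε hε
  have hδ : (0:ℝ) < ε / (C + 1) := by positivity
  filter_upwards [(Metric.tendstoUniformlyOn_iff.1 huni) (ε/(C+1)) hδ] with n hn
  have hsup : ∀ z ∈ Metric.sphere (0:ℂ) ((1+ρ)/2), ‖φ n z‖ ≤ ε/(C+1) := by
    intro z hz
    have h := hn z hz
    rw [Pi.zero_apply, dist_zero_left] at h
    exact h.le
  have hb := hkey (φ n) (ε/(C+1)) hδ.le (hhol n) (hint n) hsup
  refine lt_of_le_of_lt hb ?_
  have h2 : C * (ε/(C+1)) < (C+1) * (ε/(C+1)) :=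
    mul_lt_mul_of_pos_right (by linarith) hδ
  have h3 : (C+1) * (ε/(C+1)) = ε := by field_simp
  linarith


end
end
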